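/- Let Q : U → ℝ^K be differentiable on an open convex set U ⊆ ℝ^K. Then Q satisfies the law of demand on U if and only if for every u ∈ U the Jacobian J(u) (the derivative of Q at u) is weakly quasi-definite, i.e., ⟪v, J(u) v⟫ ≥ 0 for all v ∈ ℝ^K. -/

import Mathlib

open scoped RealInnerProductSpace
open Filter

theorem stmt_7 {K : ℕ} (U : Set (EuclideanSpace ℝ (Fin K)))
    (hUopen : IsOpen U) (hUconv : Convex ℝ U)
    (Q : EuclideanSpace ℝ (Fin K) → EuclideanSpace ℝ (Fin K))
    (J : EuclideanSpace ℝ (Fin K) →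
      EuclideanSpace ℝ (Fin K) →L[ℝ] EuclideanSpace ℝ (Fin K))
    (hdiff : ∀ u ∈ U, HasFDerivAt Q (J u) u) :
    (∀ u ∈ U, ∀ w ∈ U, (0:ℝ) ≤ ⟪Q u - Q w, u - w⟫) ↔
      (∀ u ∈ U, ∀ v, (0:ℝ) ≤ ⟪v, J u v⟫) := by
  constructor
  · intro hmon u hu v
    -- consider h t = ⟪Q (u + t • v), v⟫
    set h : ℝ → ℝ := fun t => ⟪Q (u + t • v), v⟫ with hh
    have hγ : HasDerivAt (fun t : ℝ => u + t • v) v 0 := by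
      simpa using ((hasDerivAt_id (0:ℝ)).smul_const v).const_add u
    have hd : HasDerivAt h ⟪J u (v), v⟫ 0 := by
      have hQγ : HasDerivAt (fun t : ℝ => Q (u + t • v)) (J u v) 0 := by
        have hd0 : HasFDerivAt Q (J u) (u + (0:ℝ) • v) := by simpa using hdiff u hu
        have := hd0.comp_hasDerivAt 0 hγ
        exact this
      have := hQγ.inner ℝ (hasDerivAt_const (0:ℝ) v)
      simpa using this
    have hslope : Tendsto (slope h 0) (nhdsWithin 0 {(0:ℝ)}ᶜ) (nhds ⟪J u v, v⟫) :=
      hasDerivAt_iff_tendsto_slope.mp hd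
    have hslope' : Tendsto (slope h 0) (nhdsWithin 0 (Set.Ioi 0)) (nhds ⟪J u v, v⟫) :=
      hslope.mono_left (nhdsWithin_mono 0 (fun x hx => ne_of_gt hx))
    obtain ⟨ε, hε, hball⟩ := Metric.isOpen_iff.mp hUopen u hu
    have hev : ∀ᶠ t in nhdsWithin (0:ℝ) (Set.Ioi 0), 0 ≤ slope h 0 t := by
      rcases eq_or_ne v 0 with rfl | hv
      · filter_upwards with t
        simp [slope, hh]
      · have hδ : (0:ℝ) < ε / ‖v‖ := div_pos hε (norm_pos_iff.mpr hv)
        filter_upwards [Ioo_mem_nhdsGT_of_mem (Set.left_mem_Ico.mpr hδ)] with t ht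
        obtain ⟨ht0, htδ⟩ := ht
        have hmem : u + t • v ∈ U := by
          apply hball
          simp only [Metric.mem_ball, dist_eq_norm]
          have : ‖u + t • v - u‖ = t * ‖v‖ := by
            simp [norm_smul, abs_of_pos ht0]
          rw [this]
          calc t * ‖v‖ < (ε / ‖v‖) * ‖v‖ := by
                exact mul_lt_mul_of_pos_right htδ (norm_pos_iff.mpr hv)
            _ = ε := div_mul_cancel₀ ε (norm_ne_zero_iff.mpr hv)
        have := hmon (u + t • v) hmem u hu
        have hinner : (0:ℝ) ≤ ⟪Q (u + t • v) - Q u, t • v⟫ := by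
          simpa using this
        simp only [inner_sub_left, real_inner_smul_right] at hinner
        have hsub : (0:ℝ) ≤ h t - h 0 := by
          have : (0:ℝ) ≤ ⟪Q (u + t • v), v⟫ - ⟪Q u, v⟫ := by nlinarith [hinner, ht0]
          simpa [hh] using this
        have : slope h 0 t = (h t - h 0) / t := by simp [slope, div_eq_inv_mul]
        rw [this]
        positivity
    have hfin : (0:ℝ) ≤ ⟪J u v, v⟫ :=
      ge_of_tendsto hslope' hev
    rwa [real_inner_comm]
  · intro hpsd u hu w hw
    set γ : ℝ → EuclideanSpace ℝ (Fin K) := fun t => w + t • (u - w) with hγdef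
    have hγU : ∀ t ∈ Set.Icc (0:ℝ) 1, γ t ∈ U := by
      intro t ht
      have key : γ t = (1 - t) • w + t • u := by
        simp only [hγdef, smul_sub, sub_smul, one_smul]; abel
      rw [key]
      exact hUconv hw hu (by linarith [ht.2]) ht.1 (by ring)
    set φ : ℝ → ℝ := fun t => ⟪Q (γ t), u - w⟫ with hφdef
    have hφd : ∀ t ∈ Set.Icc (0:ℝ) 1, HasDerivAt φ ⟪J (γ t) (u - w), u - w⟫ t := by
      intro t ht
      have hγ' : HasDerivAt γ (u - w) t := by
        have := ((hasDerivAt_id t).smul_const (u - w)).const_add w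
        rw [one_smul] at this
        exact this
      have hQγ : HasDerivAt (fun s => Q (γ s)) (J (γ t) (u - w)) t := by
        have := (hdiff (γ t) (hγU t ht)).comp_hasDerivAt t hγ'
        exact this
      have := hQγ.inner ℝ (hasDerivAt_const t (u - w))
      simpa using this
    have hmono : MonotoneOn φ (Set.Icc 0 1) := by
      apply monotoneOn_of_deriv_nonneg (convex_Icc 0 1)
      · exact fun t ht => ((hφd t ht).continuousAt).continuousWithinAt
      · intro t ht
        rw [interior_Icc] at ht
        exact ((hφd t (Set.mem_Icc_of_Ioo ht)).differentiableAt).differentiableWithinAt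
      · intro t ht
        rw [interior_Icc] at ht
        rw [(hφd t (Set.mem_Icc_of_Ioo ht)).deriv]
        have := hpsd (γ t) (hγU t (Set.mem_Icc_of_Ioo ht)) (u - w)
        rwa [real_inner_comm] at this
    have h01 : φ 0 ≤ φ 1 :=
      hmono (Set.left_mem_Icc.mpr zero_le_one) (Set.right_mem_Icc.mpr zero_le_one) zero_le_one
    have hγ0 : γ 0 = w := by simp [hγdef]
    have hγ1 : γ 1 = u := by simp [hγdef]
    have : ⟪Q u - Q w, u - w⟫ = φ 1 - φ 0 := by
      simp [hφdef, hγ0, hγ1, inner_sub_left]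
    rw [this]
    linarith
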